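/- Let B > 0 and r ≠ 0, and set ν = B/r. The determinant of the 4×4 matrix M(r,B) vanishes if and only if cos(ν)·e^{2ν} + 2·e^{ν} + cos(ν) = 0; equivalently (when cos ν ≠ 0), if and only if e^{ν} = (−1+sin ν)/cos ν or e^{ν} = (−1−sin ν)/cos ν. Moreover, if cos ν = 0 then Det M(r,B) ≠ 0. -/

import Mathlib

open Real


theorem my_det_fin_four {R : Type*} [CommRing R] (M : Matrix (Fin 4) (Fin 4) R) :
    M.det =
      M 0 0 * (M 1 1 * (M 2 2 * M 3 3 - M 2 3 * M 3 2) -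
               M 1 2 * (M 2 1 * M 3 3 - M 2 3 * M 3 1) +
               M 1 3 * (M 2 1 * M 3 2 - M 2 2 * M 3 1)) -
      M 0 1 * (M 1 0 * (M 2 2 * M 3 3 - M 2 3 * M 3 2) -
               M 1 2 * (M 2 0 * M 3 3 - M 2 3 * M 3 0) +
               M 1 3 * (M 2 0 * M 3 2 - M 2 2 * M 3 0)) +
      M 0 2 * (M 1 0 * (M 2 1 * M 3 3 - M 2 3 * M 3 1) -
               M 1 1 * (M 2 0 * M 3 3 - M 2 3 * M 3 0) +
               M 1 3 * (M 2 0 * M 3 1 - M 2 1 * M 3 0)) -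
      M 0 3 * (M 1 0 * (M 2 1 * M 3 2 - M 2 2 * M 3 1) -
               M 1 1 * (M 2 0 * M 3 2 - M 2 2 * M 3 0) +
               M 1 2 * (M 2 0 * M 3 1 - M 2 1 * M 3 0)) := by
  simp [Matrix.det_succ_row_zero, Fin.sum_univ_succ, Fin.succAbove]
  ring

/-- With `ν = B/r`, the determinant of the matrix `M(r,B)` vanishes
iff `cos(ν) e^{2ν} + 2 e^{ν} + cos(ν) = 0`; equivalently, when `cos ν ≠ 0`, iff
`e^{ν} = (−1+sin ν)/cos ν` or `e^{ν} = (−1−sin ν)/cos ν`; and if `cos ν = 0` then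
`Det M(r,B) ≠ 0`. -/
theorem stmt_12 (B r : ℝ) (hB : 0 < B) (hr : r ≠ 0) (ν : ℝ) (hν : ν = B / r) :
    letI M : Matrix (Fin 4) (Fin 4) ℝ :=
      !![r⁻¹ * exp (B / r), -r⁻¹ * exp (-(B / r)), r⁻¹ * sin (B / r), -r⁻¹ * cos (B / r);
         -r⁻¹ ^ 2 * exp (B / r), -r⁻¹ ^ 2 * exp (-(B / r)), r⁻¹ ^ 2 * cos (B / r),
           r⁻¹ ^ 2 * sin (B / r);
         r⁻¹ ^ 3, -r⁻¹ ^ 3, 0, r⁻¹ ^ 3;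
         r⁻¹ ^ 4, r⁻¹ ^ 4, r⁻¹ ^ 4, 0]
    (M.det = 0 ↔ cos ν * exp ν ^ 2 + 2 * exp ν + cos ν = 0) ∧
    (cos ν ≠ 0 →
      (M.det = 0 ↔ exp ν = (-1 + sin ν) / cos ν ∨ exp ν = (-1 - sin ν) / cos ν)) ∧
    (cos ν = 0 → M.det ≠ 0) := by
  simp only [← hν]
  set M : Matrix (Fin 4) (Fin 4) ℝ :=
    !![r⁻¹ * exp ν, -r⁻¹ * exp (-ν), r⁻¹ * sin ν, -r⁻¹ * cos ν;
       -r⁻¹ ^ 2 * exp ν, -r⁻¹ ^ 2 * exp (-ν), r⁻¹ ^ 2 * cos ν, r⁻¹ ^ 2 * sin ν;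
       r⁻¹ ^ 3, -r⁻¹ ^ 3, 0, r⁻¹ ^ 3;
       r⁻¹ ^ 4, r⁻¹ ^ 4, r⁻¹ ^ 4, 0] with hM
  have hE : exp ν ≠ 0 := (exp_pos ν).ne'
  have hEinv : exp (-ν) = (exp ν)⁻¹ := exp_neg ν
  have hrinv : r⁻¹ ≠ 0 := inv_ne_zero hr
  have hdet : M.det = 2 * r⁻¹ ^ 10 * (exp ν)⁻¹ *
      (cos ν * exp ν ^ 2 + 2 * exp ν + cos ν) := by
    rw [my_det_fin_four, hM]
    simp only [Matrix.of_apply, Matrix.cons_val', Matrix.cons_val_zero, Matrix.cons_val_one, Matrix.head_cons,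
      Matrix.empty_val', Matrix.cons_val_fin_one, Matrix.head_fin_const, Matrix.cons_val_two,
      Matrix.cons_val_three, Matrix.tail_cons, hEinv]
    field_simp
    linear_combination (2 * rexp ν) * sin_sq_add_cos_sq ν
  have hpre : (2 : ℝ) * r⁻¹ ^ 10 * (exp ν)⁻¹ ≠ 0 := by positivity
  have key : M.det = 0 ↔ cos ν * exp ν ^ 2 + 2 * exp ν + cos ν = 0 := by
    rw [hdet, mul_eq_zero]
    constructor
    · rintro (h | h)
      · exact absurd h hpre
      · exact h
    · exact Or.inr
  refine ⟨key, ?_, ?_⟩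
  · intro hc
    rw [key]
    have hfac : cos ν * exp ν ^ 2 + 2 * exp ν + cos ν =
        cos ν * (exp ν - (-1 + sin ν) / cos ν) * (exp ν - (-1 - sin ν) / cos ν) := by
      have hs2 : sin ν ^ 2 = 1 - cos ν ^ 2 := by
        have := sin_sq_add_cos_sq ν; linarith
      field_simp
      linear_combination hs2
    rw [hfac]
    rw [mul_eq_zero, mul_eq_zero, sub_eq_zero, sub_eq_zero]
    constructor
    · rintro ((h | h) | h)
      · exact absurd h hc
      · exact Or.inl h
      · exact Or.inr h
    · rintro (h | h)
      · exact Or.inl (Or.inr h)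
      · exact Or.inr h
  · intro hc
    rw [hdet, hc]
    have : (0 : ℝ) * exp ν ^ 2 + 2 * exp ν + 0 = 2 * exp ν := by ring
    rw [this]
    positivity
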